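/- arXiv:0806.2996 — 2 statements merged into one kernel-verified Lean document; each statement's English description precedes it below -/
import Mathlib

section
/- Let S be an entire commutative antiring with no nonzero nilpotent elements, and let A ∈ Mₙ(S) be nilpotent with nilpotency index h(A) (so A^{h(A)} = 0, A^{h(A)-1} ≠ 0). Then the longest path in the digraph D(A) has length exactly h(A) − 1. -/
/-- In a zerosumfree semiring, every term of a zero finite sum is zero. -/
lemma zsf_sum_eq_zero {S : Type*} [CommSemiring S]
    (hzs : ∀ a b : S, a + b = 0 → a = 0 ∧ b = 0)
    {α : Type*} [DecidableEq α] (s : Finset α) (g : α → S)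
    (h : ∑ x ∈ s, g x = 0) {x : α} (hx : x ∈ s) : g x = 0 :=
  (hzs _ _ ((Finset.add_sum_erase s g hx).trans h)).1

/-- Row sums of matrix powers as sums over paths. -/
lemma rowsum_pow {S : Type*} [CommSemiring S] (n : ℕ) (A : Matrix (Fin n) (Fin n) S) :
    ∀ (k : ℕ) (i : Fin n),
      ∑ j, (A ^ k) i j =
        ∑ f : Fin k → Fin n, ∏ t : Fin k,
          A ((Fin.cons i f : Fin _ → Fin n) t.castSucc) ((Fin.cons i f : Fin _ → Fin n) t.succ) := by
  intro k
  induction k with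
  | zero =>
    intro i
    simp [Matrix.one_apply]
  | succ k ih =>
    intro i
    rw [pow_succ']
    have hL : ∑ j, (A * A ^ k) i j = ∑ l, A i l * ∑ j, (A ^ k) l j := by
      simp only [Matrix.mul_apply, Finset.mul_sum]
      rw [Finset.sum_comm]
    rw [hL]
    have hR := Equiv.sum_comp (Fin.consEquiv (fun _ : Fin (k + 1) => Fin n))
      (fun f : Fin (k + 1) → Fin n => ∏ t : Fin (k + 1),
        A ((Fin.cons i f : Fin _ → Fin n) t.castSucc)
          ((Fin.cons i f : Fin _ → Fin n) t.succ))
    rw [← hR, Fintype.sum_prod_type]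
    refine Finset.sum_congr rfl fun l _ => ?_
    rw [ih l, Finset.mul_sum]
    refine Finset.sum_congr rfl fun f _ => ?_

    rw [Fin.prod_univ_succ]
    congr 1

/-- Over an entire commutative antiring with no nonzero nilpotents, if `A` has nilpotency
index `m + 1` (i.e. `A^(m+1) = 0` and `A^m ≠ 0`), then the longest path in the digraph
`D(A)` has length exactly `m`: there is a path of length `m` and no path of length `m+1`. -/
theorem stmt_13 {S : Type*} [CommSemiring S]
    (hzs : ∀ a b : S, a + b = 0 → a = 0 ∧ b = 0)
    (hent : ∀ a b : S, a * b = 0 → a = 0 ∨ b = 0)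
    (hnil : ∀ a : S, IsNilpotent a → a = 0)
    (n m : ℕ) (A : Matrix (Fin n) (Fin n) S)
    (h0 : A ^ (m + 1) = 0) (h1 : A ^ m ≠ 0) :
    (∃ f : Fin (m + 1) → Fin n,
      ∏ t : Fin m, A (f t.castSucc) (f t.succ) ≠ 0) ∧
    (∀ f : Fin (m + 2) → Fin n,
      ∏ t : Fin (m + 1), A (f t.castSucc) (f t.succ) = 0) := by
  constructor
  · by_contra hc
    push_neg at hc
    apply h1
    ext i j
    have hrs := rowsum_pow n A m i
    have hall : ∀ f : Fin m → Fin n,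
        ∏ t : Fin m, A ((Fin.cons i f : Fin _ → Fin n) t.castSucc) ((Fin.cons i f : Fin _ → Fin n) t.succ) = 0 :=
      fun f => hc (Fin.cons i f)
    have hsum0 : ∑ j, (A ^ m) i j = 0 := by
      rw [hrs]
      exact Finset.sum_eq_zero fun f _ => hall f
    have := zsf_sum_eq_zero hzs Finset.univ (fun j => (A ^ m) i j) hsum0
      (Finset.mem_univ j)
    simpa using this
  · intro f
    have hrs := rowsum_pow n A (m + 1) (f 0)
    rw [h0] at hrs
    simp only [Matrix.zero_apply, Finset.sum_const_zero] at hrs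
    have := zsf_sum_eq_zero hzs Finset.univ
      (fun g : Fin (m + 1) → Fin n => ∏ t : Fin (m + 1),
        A ((Fin.cons (f 0) g : Fin _ → Fin n) t.castSucc) ((Fin.cons (f 0) g : Fin _ → Fin n) t.succ))
      hrs.symm (Finset.mem_univ (Fin.tail f))
    simpa [Fin.cons_self_tail, Fin.tail] using this
end

section
/- Let S be an entire commutative antiring with no nonzero nilpotent elements and let A be a nilpotent n×n matrix over S. Then A can be written as a sum of ⌈log₂ n⌉ matrices B₁,...,B_{⌈log₂ n⌉} over S, each satisfying Bᵢ² = 0. Moreover, for every n there exists a nilpotent A ∈ Mₙ(S) that cannot be written as a sum of fewer than ⌈log₂ n⌉ square-zero matrices. -/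
/-- In a zerosumfree semiring, a finite sum is zero iff each term is zero. -/
lemma aux19_sum_eq_zero {S : Type*} [CommSemiring S]
    (hzs : ∀ a b : S, a + b = 0 → a = 0 ∧ b = 0)
    {ι : Type*} (s : Finset ι) (f : ι → S) (h : ∑ i ∈ s, f i = 0) :
    ∀ i ∈ s, f i = 0 := by
  induction s using Finset.cons_induction with
  | empty => simp
  | cons a s ha ih =>
    rw [Finset.sum_cons] at h
    obtain ⟨h1, h2⟩ := hzs _ _ h
    intro i hi
    rcases Finset.mem_cons.mp hi with rfl | hi
    · exact h1
    · exact ih h2 i hi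

/-- Highest differing bit of `x < y`: `x` has a `0` and `y` has a `1` there. -/
lemma aux19_key {x y : ℕ} (hxy : x < y) :
    x.testBit (Nat.log 2 (x ^^^ y)) = false ∧ y.testBit (Nat.log 2 (x ^^^ y)) = true := by
  set t := Nat.log 2 (x ^^^ y) with ht
  have hne : x ^^^ y ≠ 0 := by simpa [xor_eq_zero_iff] using hxy.ne
  have hle : 2 ^ t ≤ x ^^^ y := Nat.pow_log_le_self 2 hne
  have hlt : x ^^^ y < 2 ^ (t + 1) := Nat.lt_pow_succ_log_self (by norm_num) _
  have hdiv : (x ^^^ y) / 2 ^ t = 1 := by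
    have h2 : (x ^^^ y) / 2 ^ t < 2 := by
      rw [Nat.div_lt_iff_lt_mul (Nat.two_pow_pos t)]
      calc x ^^^ y < 2 ^ (t + 1) := hlt
        _ = 2 * 2 ^ t := by rw [pow_succ]; ring
    have h1 : 1 ≤ (x ^^^ y) / 2 ^ t := (Nat.one_le_div_iff (Nat.two_pow_pos t)).mpr hle
    omega
  have hbit : (x ^^^ y).testBit t = true := by
    rw [Nat.testBit_eq_decide_div_mod_eq, hdiv]
    decide
  rw [Nat.testBit_xor] at hbit
  have hagree : ∀ j, t < j → x.testBit j = y.testBit j := by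
    intro j hj
    have hfj : (x ^^^ y).testBit j = false :=
      Nat.testBit_eq_false_of_lt
        (lt_of_lt_of_le hlt (Nat.pow_le_pow_right (by norm_num) hj))
    rw [Nat.testBit_xor] at hfj
    cases hx : x.testBit j <;> cases hy : y.testBit j <;> simp [hx, hy] at hfj ⊢
  cases hx : x.testBit t <;> cases hy : y.testBit t
  · rw [hx, hy] at hbit; simp at hbit
  · exact ⟨rfl, rfl⟩
  · exact absurd (Nat.lt_of_testBit t hy hx (fun j hj => (hagree j hj).symm)) (by omega)
  · rw [hx, hy] at hbit; simp at hbit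

/-- Harner–Entringer coloring: for `a < b < c` the highest differing bits of the two
pairs are different. -/
lemma aux19_hbit {a b c : ℕ} (hab : a < b) (hbc : b < c) :
    Nat.log 2 (a ^^^ b) ≠ Nat.log 2 (b ^^^ c) := by
  intro heq
  have h1 := (aux19_key hab).2
  have h2 := (aux19_key hbc).1
  rw [heq] at h1
  rw [h1] at h2
  simp at h2

/-- A nilpotent matrix over an entire antiring admits a strict labeling with values `< n`. -/
lemma aux19_label {S : Type*} [CommSemiring S] [Nontrivial S]
    (hzs : ∀ a b : S, a + b = 0 → a = 0 ∧ b = 0)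
    (hent : ∀ a b : S, a * b = 0 → a = 0 ∨ b = 0)
    {n : ℕ} (A : Matrix (Fin n) (Fin n) S) (hA : IsNilpotent A) :
    ∃ τ : Fin n → ℕ, (∀ i, τ i < n) ∧ (∀ i j, A i j ≠ 0 → τ i < τ j) := by
  classical
  obtain ⟨N, hN⟩ := hA
  have hN' : A ^ (N + 1) = 0 := by rw [pow_succ, hN, zero_mul]
  set M := N + 1 with hM
  let ρ : Fin n → ℕ := fun i => Nat.findGreatest (fun m => ∃ kk : Fin n, (A ^ m) kk i ≠ 0) M
  have hspec : ∀ i : Fin n, ∃ kk : Fin n, (A ^ ρ i) kk i ≠ 0 := by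
    intro i
    exact Nat.findGreatest_spec (P := fun m => ∃ kk : Fin n, (A ^ m) kk i ≠ 0)
      (Nat.zero_le M) ⟨i, by rw [pow_zero]; simp [Matrix.one_apply_eq]⟩
  have hltM : ∀ i, ρ i < M := by
    intro i
    rcases Nat.lt_or_ge (ρ i) M with h | h
    · exact h
    · obtain ⟨kk, hkk⟩ := hspec i
      have heq : ρ i = M := le_antisymm (Nat.findGreatest_le M) h
      rw [heq, hN'] at hkk
      exact absurd (Matrix.zero_apply kk i) hkk
  have edge : ∀ i j : Fin n, A i j ≠ 0 → ρ i < ρ j := by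
    intro i j hij
    obtain ⟨kk, hkk⟩ := hspec i
    have hstep : ∃ w : Fin n, (A ^ (ρ i + 1)) w j ≠ 0 := by
      refine ⟨kk, ?_⟩
      rw [pow_succ, Matrix.mul_apply]
      intro hsum
      rcases hent _ _ (aux19_sum_eq_zero hzs _ _ hsum i (Finset.mem_univ i)) with h | h
      · exact hkk h
      · exact hij h
    have h2 : ρ i + 1 ≤ ρ j := Nat.le_findGreatest (hltM i) hstep
    omega
  -- refine to a labeling with values < n
  let lt' : Fin n → Fin n → Prop := fun i j => ρ i < ρ j ∨ (ρ i = ρ j ∧ i < j)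
  let τ : Fin n → ℕ := fun i => (Finset.univ.filter (fun k => lt' k i)).card
  have τlt : ∀ i, τ i < n := by
    intro i
    have hsub : Finset.univ.filter (fun k => lt' k i) ⊆ Finset.univ.erase i := by
      intro k hk
      simp only [Finset.mem_filter] at hk
      refine Finset.mem_erase.mpr ⟨?_, Finset.mem_univ k⟩
      rintro rfl
      rcases hk.2 with h | h
      · omega
      · exact absurd h.2 (lt_irrefl _)
    have hc := Finset.card_le_card hsub
    have hce : (Finset.univ.erase i).card = n - 1 := by
      rw [Finset.card_erase_of_mem (Finset.mem_univ i), Finset.card_univ, Fintype.card_fin]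
    have hpos : 0 < n := i.pos
    simp only [τ]
    omega
  have τmono : ∀ i j, lt' i j → τ i < τ j := by
    intro i j hij
    apply Finset.card_lt_card
    have hsub : Finset.univ.filter (fun k => lt' k i) ⊆ Finset.univ.filter (fun k => lt' k j) := by
      intro k hk
      simp only [Finset.mem_filter, Finset.mem_univ, true_and] at hk ⊢
      simp only [lt', Fin.lt_def] at hk hij ⊢
      omega
    refine (Finset.ssubset_iff_of_subset hsub).mpr ⟨i, ?_, ?_⟩
    · simp only [Finset.mem_filter, Finset.mem_univ, true_and]
      exact hij
    · simp only [Finset.mem_filter, Finset.mem_univ, true_and]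
      intro h
      rcases h with h | h
      · omega
      · exact absurd h.2 (lt_irrefl _)
  exact ⟨τ, τlt, fun i j h => τmono _ _ (Or.inl (edge _ _ h))⟩

/-- Over a nontrivial entire commutative antiring with no nonzero nilpotent elements, every
nilpotent `n × n` matrix is a sum of `⌈log₂ n⌉` square-zero matrices, and this bound is
sharp: some nilpotent matrix is not a sum of fewer square-zero matrices. -/
theorem stmt_19 {S : Type*} [CommSemiring S] [Nontrivial S]
    (hzs : ∀ a b : S, a + b = 0 → a = 0 ∧ b = 0)
    (hent : ∀ a b : S, a * b = 0 → a = 0 ∨ b = 0)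
    (hnil : ∀ a : S, IsNilpotent a → a = 0)
    (n : ℕ) :
    (∀ A : Matrix (Fin n) (Fin n) S, IsNilpotent A →
      ∃ B : Fin (Nat.clog 2 n) → Matrix (Fin n) (Fin n) S,
        (∀ i, B i * B i = 0) ∧ A = ∑ i, B i) ∧
    (∃ A : Matrix (Fin n) (Fin n) S, IsNilpotent A ∧
      ∀ k, k < Nat.clog 2 n → ∀ B : Fin k → Matrix (Fin n) (Fin n) S,
        (∀ i, B i * B i = 0) → A ≠ ∑ i, B i) := by
  classical
  constructor
  · -- Part 1: every nilpotent matrix is a sum of ⌈log₂ n⌉ square-zero matrices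
    intro A hA
    obtain ⟨τ, τlt, τedge⟩ := aux19_label hzs hent A hA
    refine ⟨fun t => Matrix.of fun i j =>
      if Nat.log 2 (τ i ^^^ τ j) = (t : ℕ) then A i j else 0, ?_, ?_⟩
    · -- each is square-zero
      intro t
      ext i k
      rw [Matrix.mul_apply, Matrix.zero_apply]
      apply Finset.sum_eq_zero
      intro j _
      by_contra hterm
      have h1 : (if Nat.log 2 (τ i ^^^ τ j) = (t : ℕ) then A i j else 0) ≠ 0 := by
        intro h0
        apply hterm
        simp only [Matrix.of_apply]
        rw [h0, zero_mul]
      have h2 : (if Nat.log 2 (τ j ^^^ τ k) = (t : ℕ) then A j k else 0) ≠ 0 := by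
        intro h0
        apply hterm
        simp only [Matrix.of_apply]
        rw [h0, mul_zero]
      have hc1 : Nat.log 2 (τ i ^^^ τ j) = (t : ℕ) ∧ A i j ≠ 0 := by
        by_cases hc : Nat.log 2 (τ i ^^^ τ j) = (t : ℕ)
        · exact ⟨hc, by simpa [hc] using h1⟩
        · simp [hc] at h1
      have hc2 : Nat.log 2 (τ j ^^^ τ k) = (t : ℕ) ∧ A j k ≠ 0 := by
        by_cases hc : Nat.log 2 (τ j ^^^ τ k) = (t : ℕ)
        · exact ⟨hc, by simpa [hc] using h2⟩
        · simp [hc] at h2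
      exact aux19_hbit (τedge _ _ hc1.2) (τedge _ _ hc2.2) (hc1.1.trans hc2.1.symm)
    · -- the sum is A
      ext i j
      rw [Matrix.sum_apply]
      by_cases hij : A i j = 0
      · rw [hij]
        symm
        apply Finset.sum_eq_zero
        intro t _
        simp only [Matrix.of_apply]
        split <;> simp [hij]
      · have hτ : τ i < τ j := τedge _ _ hij
        have hne : τ i ^^^ τ j ≠ 0 := by simpa [xor_eq_zero_iff] using hτ.ne
        have hclt : Nat.log 2 (τ i ^^^ τ j) < Nat.clog 2 n :=
          Nat.log_lt_of_lt_pow hne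
            (Nat.xor_lt_two_pow
              (lt_of_lt_of_le (τlt i) (Nat.le_pow_clog (by norm_num) n))
              (lt_of_lt_of_le (τlt j) (Nat.le_pow_clog (by norm_num) n)))
        symm
        rw [Finset.sum_eq_single (⟨Nat.log 2 (τ i ^^^ τ j), hclt⟩ : Fin (Nat.clog 2 n))]
        · simp only [Matrix.of_apply]
          simp
        · intro b _ hb
          simp only [Matrix.of_apply]
          rw [if_neg]
          intro h
          exact hb (Fin.ext h.symm)
        · intro h
          exact absurd (Finset.mem_univ _) h
  · -- Part 2: sharpness
    set A : Matrix (Fin n) (Fin n) S :=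
      Matrix.of fun i j => if (i : ℕ) < (j : ℕ) then (1 : S) else 0 with hAdef
    have hpow : ∀ m (i j : Fin n), (A ^ m) i j ≠ 0 → (i : ℕ) + m ≤ (j : ℕ) := by
      intro m
      induction m with
      | zero =>
        intro i j h
        rw [pow_zero] at h
        rcases eq_or_ne i j with rfl | hne
        · omega
        · exact absurd (Matrix.one_apply_ne hne) h
      | succ m ih =>
        intro i j h
        rw [pow_succ, Matrix.mul_apply] at h
        obtain ⟨l, -, hl⟩ := Finset.exists_ne_zero_of_sum_ne_zero h
        have h1 : (A ^ m) i l ≠ 0 := fun h0 => hl (by rw [h0, zero_mul])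
        have h2 : A l j ≠ 0 := fun h0 => hl (by rw [h0, mul_zero])
        have hlj : (l : ℕ) < (j : ℕ) := by
          by_contra hc
          exact h2 (by rw [hAdef]; simp only [Matrix.of_apply]; rw [if_neg hc])
        have := ih i l h1
        omega
    have hAnil : IsNilpotent A := by
      refine ⟨n, ?_⟩
      ext i j
      rw [Matrix.zero_apply]
      by_contra h
      have := hpow n i j h
      have := j.isLt
      omega
    refine ⟨A, hAnil, ?_⟩
    intro k hk B hB hAB
    have hcol : ∀ i j : Fin n, (i : ℕ) < (j : ℕ) → ∃ t, B t i j ≠ 0 := by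
      intro i j hij
      by_contra hc
      push_neg at hc
      have hzero : A i j = 0 := by
        rw [hAB, Matrix.sum_apply]
        exact Finset.sum_eq_zero fun t _ => hc t
      rw [hAdef] at hzero
      simp only [Matrix.of_apply, if_pos hij] at hzero
      exact one_ne_zero hzero
    set φ : Fin n → Finset (Fin k) := fun v =>
      Finset.univ.filter (fun t => ∃ u : Fin n, (u : ℕ) < (v : ℕ) ∧ B t u v ≠ 0) with hφ
    have hmono : ∀ u v : Fin n, (u : ℕ) < (v : ℕ) → φ u ≠ φ v := by
      intro u v huv heq
      obtain ⟨t, ht⟩ := hcol u v huv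
      have htv : t ∈ φ v := by
        simp only [hφ, Finset.mem_filter]
        exact ⟨Finset.mem_univ _, u, huv, ht⟩
      rw [← heq] at htv
      simp only [hφ, Finset.mem_filter] at htv
      obtain ⟨-, w, hwu, hw⟩ := htv
      have hz : (B t * B t) w v = 0 := by rw [hB t, Matrix.zero_apply]
      rw [Matrix.mul_apply] at hz
      rcases hent _ _ (aux19_sum_eq_zero hzs _ _ hz u (Finset.mem_univ u)) with h | h
      · exact hw h
      · exact ht h
    have hinj : Function.Injective φ := by
      intro u v heq
      by_contra hne
      rcases lt_trichotomy (u : ℕ) (v : ℕ) with h | h | h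
      · exact hmono u v h heq
      · exact hne (Fin.ext h)
      · exact hmono v u h heq.symm
    have hcard : n ≤ 2 ^ k := by
      have := Fintype.card_le_of_injective φ hinj
      simpa [Fintype.card_finset] using this
    have := (Nat.clog_le_iff_le_pow (by norm_num)).mpr hcard
    omega
end
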